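/- Let m1, m2, n1 ≥ 0 with m2 > 0. The cardinality of the union of {(b,c) ∈ Z_+^2 : 2b+c ≤ min(m2+n1, m1+2m2), c ≤ 1, b ≥ m2} and {a ∈ Z_+ : a < min(n1−m2−m1, m1+2m2)} equals: 0 if n1 < m2; n1−m2+1 if m2 ≤ n1 < 2m1+3m2; and 2(m1+m2)+1 if n1 ≥ 2m1+3m2. (Here the first set has cardinality 0 if n1 < m2 and min(n1−m2, m1)+1 otherwise; the second has cardinality 0 if n1 < m1+m2 and min(n1−m2−m1, m1+2m2) otherwise.) -/
import Mathlib


/-- Increment count m in the inductive step for ³T^G in type G2. -/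
theorem stmt_19 (m1 m2 n1 : ℤ) (hm1 : 0 ≤ m1) (hm2 : 0 < m2) (hn1 : 0 ≤ n1) :
    ((Set.ncard {p : ℤ × ℤ | 0 ≤ p.1 ∧ 0 ≤ p.2 ∧
          2 * p.1 + p.2 ≤ min (m2 + n1) (m1 + 2 * m2) ∧ p.2 ≤ 1 ∧ m2 ≤ p.1}) +
      (Set.ncard {a : ℤ | 0 ≤ a ∧ a < min (n1 - m2 - m1) (m1 + 2 * m2)}) : ℤ) =
      if n1 < m2 then 0
      else if n1 < 2 * m1 + 3 * m2 then n1 - m2 + 1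
      else 2 * (m1 + m2) + 1 := by
  set M : ℤ := min (m2 + n1) (m1 + 2 * m2) with hM
  set K : ℤ := min (n1 - m2 - m1) (m1 + 2 * m2) with hK
  set S : Set (ℤ × ℤ) := {p : ℤ × ℤ | 0 ≤ p.1 ∧ 0 ≤ p.2 ∧
      2 * p.1 + p.2 ≤ M ∧ p.2 ≤ 1 ∧ m2 ≤ p.1} with hS
  have hinj : Set.InjOn (fun p : ℤ × ℤ => 2 * p.1 + p.2) S := by
    rintro ⟨b, c⟩ ⟨h1, h2, h3, h4, h5⟩ ⟨b', c'⟩ ⟨h1', h2', h3', h4', h5'⟩ h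
    simp only at h
    have : b = b' ∧ c = c' := by omega
    simp [this.1, this.2]
  have himg : (fun p : ℤ × ℤ => 2 * p.1 + p.2) '' S = Set.Icc (2 * m2) M := by
    ext v
    constructor
    · rintro ⟨⟨b, c⟩, ⟨h1, h2, h3, h4, h5⟩, rfl⟩
      simp only [Set.mem_Icc]
      omega
    · intro hv
      simp only [Set.mem_Icc] at hv
      refine ⟨(v / 2, v % 2), ?_, ?_⟩
      · refine ⟨?_, ?_, ?_, ?_, ?_⟩ <;> simp only [] <;> omega
      · simp only []; omega
  have h1 : (S.ncard : ℤ) = (M - 2 * m2 + 1).toNat := by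
    rw [← Set.ncard_image_of_injOn hinj, himg, ← Finset.coe_Icc,
      Set.ncard_coe_finset, Int.card_Icc]
    omega
  have h2 : (Set.ncard {a : ℤ | 0 ≤ a ∧ a < K} : ℤ) = K.toNat := by
    have : {a : ℤ | 0 ≤ a ∧ a < K} = Set.Ico 0 K := by
      ext a; simp [Set.mem_Ico]
    rw [this, ← Finset.coe_Ico, Set.ncard_coe_finset, Int.card_Ico]
    omega
  rw [h1, h2]
  split_ifs <;> omega
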